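/- Consider n buyers and m datasets; each buyer i ∈ [n] has a budget b_i ∈ ℝ≥0 and values v_{i,j} ∈ ℝ≥0, with linear valuation v_i(x) = Σ_{j=1}^m v_{i,j} x_j on [0,1]^m. For each j ∈ [m] let S_j = {v_{i,j} : i ∈ [n]}. For each j ∈ [m] let p_j : [0,1] → ℝ≥0 be an MLC pricing function and set p̂_j = disc(conv(p_j), S_j). Define p(x) = Σ_{j=1}^m p_j(x_j) and p̂(x) = Σ_{j=1}^m p̂_j(x_j). Then r(p̂|v_i,b_i) ≥ r(p|v_i,b_i) for every i ∈ [n], and each p̂_j is monotone, continuous, convex, and piecewise-linear. -/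

import Mathlib

noncomputable section

/-- The unit cube `[0,1]^m` in `Fin m → ℝ`. -/
def cube (m : ℕ) : Set (Fin m → ℝ) := Set.Icc 0 1

/-- The unit interval `[0,1] ⊆ ℝ`. -/
def unitI : Set ℝ := Set.Icc 0 1

/-- The lower limit of `f` at `x₀` relative to the domain `D` (in the extended reals). -/
def lowerLim {E : Type*} [SeminormedAddCommGroup E] (D : Set E) (f : E → ℝ) (x₀ : E) : EReal :=
  ⨆ δ : {δ : ℝ // 0 < δ}, ⨅ x : {x : E // x ∈ D ∧ ‖x - x₀‖ ≤ δ.1}, (f x.1 : EReal)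

/-- `f` is lower-continuous on `D`. -/
def LowerContOn {E : Type*} [SeminormedAddCommGroup E] (D : Set E) (f : E → ℝ) : Prop :=
  ∀ x₀ ∈ D, lowerLim D f x₀ = (f x₀ : EReal)

/-- The epigraph of `f` relative to the domain `D`. -/
def epigraph {E : Type*} (D : Set E) (f : E → ℝ) : Set (E × ℝ) :=
  {q | q.1 ∈ D ∧ f q.1 ≤ q.2}

/-- The convex hull of a function: `conv(f)(x) = inf {y : (x,y) ∈ conv(epi f)}`. -/
def funConvHull {E : Type*} [AddCommGroup E] [Module ℝ E] (D : Set E) (f : E → ℝ) : E → ℝ :=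
  fun x => sInf {y : ℝ | (x, y) ∈ convexHull ℝ (epigraph D f)}

/-- The left derivative of `f` at `x`, as an extended real, with `f'(0) = -∞`. -/
def leftD (f : ℝ → ℝ) (x : ℝ) : EReal :=
  ⨆ δ : {δ : ℝ // 0 < δ ∧ δ ≤ x}, (((f x - f (x - δ.1)) / δ.1 : ℝ) : EReal)

/-- `ℓ(f|β)`: the rightmost point of `[0,1]` at which the left derivative of `f`
is at most `β`. -/
def ell (f : ℝ → ℝ) (β : ℝ) : ℝ :=
  sSup {x ∈ unitI | leftD f x ≤ (β : EReal)}

/-- The `i`-th smallest element of a finite set `S ⊆ ℝ` (`0`-indexed). -/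
def sortedNth (S : Finset ℝ) (i : ℕ) : ℝ := (S.sort (· ≤ ·)).getD i 0

/-- The breakpoints `z_0 = 0, z_i = ℓ(f|α_i) (1 ≤ i ≤ k-1), z_k = 1` of `disc(f,S)`. -/
def discKnot (f : ℝ → ℝ) (S : Finset ℝ) (i : ℕ) : ℝ :=
  if i = 0 then 0 else if i < S.card then ell f (sortedNth S (i - 1)) else 1

/-- The discretization `disc(f,S) = f 0 + plin(z,α)` of `f` along `S = {α_1 < ⋯ < α_k}`,
where `z_i = ℓ(f|α_i)`; on `[0,1]`, `plin(z,α)(x) = ∑_i α_i (min(x,z_i) - min(x,z_{i-1}))`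
with `z_0 = 0` and `z_k = 1`. -/
def disc (f : ℝ → ℝ) (S : Finset ℝ) : ℝ → ℝ := fun x =>
  f 0 + ∑ i ∈ Finset.range S.card,
    sortedNth S i * (min x (discKnot f S (i + 1)) - min x (discKnot f S i))

/-- The affordable set `F(p|b)` (budget in the extended reals, `⊤` = infinite). -/
def afford {E : Type*} (D : Set E) (p : E → ℝ) (b : EReal) : Set E :=
  {x ∈ D | (p x : EReal) ≤ b}

/-- The maximum net utility `u*(p|v,b)`. -/
def uStar {E : Type*} (D : Set E) (p v : E → ℝ) (b : EReal) : ℝ :=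
  ⨆ x : afford D p b, (v x.1 - p x.1)

/-- The demand set `Dem(p|v,b)`. -/
def demand {E : Type*} (D : Set E) (p v : E → ℝ) (b : EReal) : Set E :=
  {x ∈ afford D p b | v x - p x = uStar D p v b}

/-- The revenue `r(p|v,b)`. -/
def revenue {E : Type*} (D : Set E) (p v : E → ℝ) (b : EReal) : ℝ :=
  ⨆ x : demand D p v b, p x.1

/-- `f` is piecewise-linear on `[0,1]`: `[0,1]` splits into finitely many intervals,
on each of which `f` is affine. -/
def PiecewiseLinearOn (f : ℝ → ℝ) : Prop :=
  ∃ (k : ℕ) (t : Fin (k + 1) → ℝ), Monotone t ∧ t 0 = 0 ∧ t (Fin.last k) = 1 ∧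
    ∀ i : Fin k, ∃ a c : ℝ, ∀ x ∈ Set.Icc (t i.castSucc) (t i.succ), f x = a * x + c

/-! ### min algebra -/

lemma min_diff_nonneg {x a b : ℝ} (hab : a ≤ b) : 0 ≤ min x b - min x a := by
  rcases le_total x a with h | h
  · simp [min_eq_left, h, le_trans h hab]
  · rcases le_total x b with h' | h'
    · simp [min_eq_right h, min_eq_left h']; linarith
    · simp [min_eq_right h, min_eq_right h']; linarith

lemma min_diff_mono {x y a b : ℝ} (hxy : x ≤ y) (hab : a ≤ b) :
    min x b - min x a ≤ min y b - min y a := by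
  rcases le_total x a with h1 | h1 <;> rcases le_total x b with h2 | h2 <;>
    rcases le_total y a with h3 | h3 <;> rcases le_total y b with h4 | h4 <;>
    simp [min_eq_left, min_eq_right, h1, h2, h3, h4] <;> linarith

lemma min_diff_le {x y a b : ℝ} (hxy : x ≤ y) (hab : a ≤ b) :
    min y b - min y a - (min x b - min x a) ≤ y - x := by
  rcases le_total x a with h1 | h1 <;> rcases le_total x b with h2 | h2 <;>
    rcases le_total y a with h3 | h3 <;> rcases le_total y b with h4 | h4 <;>
    simp [min_eq_left, min_eq_right, h1, h2, h3, h4] <;> linarith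

lemma min_diff_zero_of_le {x y a b : ℝ} (hab : a ≤ b) (hba : b ≤ x) (hxy : x ≤ y) :
    min y b - min y a - (min x b - min x a) = 0 := by
  have h1 : min x b = b := min_eq_right hba
  have h2 : min y b = b := min_eq_right (hba.trans hxy)
  have h3 : min x a = a := min_eq_right (hab.trans hba)
  have h4 : min y a = a := min_eq_right ((hab.trans hba).trans hxy)
  simp [h1, h2, h3, h4]

lemma min_diff_zero_of_ge {x y a b : ℝ} (hya : y ≤ a) (hxy : x ≤ y) (hab : a ≤ b) :
    min y b - min y a - (min x b - min x a) = 0 := by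
  have h1 : min y a = y := min_eq_left hya
  have h2 : min y b = y := min_eq_left (hya.trans hab)
  have h3 : min x a = x := min_eq_left (hxy.trans hya)
  have h4 : min x b = x := min_eq_left ((hxy.trans hya).trans hab)
  simp [h1, h2, h3, h4]

/-! ### sortedNth -/

lemma sortedNth_eq_getElem {S : Finset ℝ} {i : ℕ} (hi : i < S.card) :
    sortedNth S i = (S.sort (· ≤ ·))[i]'(by rw [Finset.length_sort]; exact hi) := by
  simp [sortedNth, List.getD_eq_getElem?_getD,
    List.getElem?_eq_getElem (show i < (S.sort (· ≤ ·)).length by rw [Finset.length_sort]; exact hi)]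

lemma sortedNth_mem {S : Finset ℝ} {i : ℕ} (hi : i < S.card) : sortedNth S i ∈ S := by
  rw [sortedNth_eq_getElem hi]
  exact (Finset.mem_sort _).1 (List.getElem_mem _)

lemma sortedNth_mono {S : Finset ℝ} {i j : ℕ} (hij : i ≤ j) (hj : j < S.card) :
    sortedNth S i ≤ sortedNth S j := by
  have hi := lt_of_le_of_lt hij hj
  rw [sortedNth_eq_getElem hi, sortedNth_eq_getElem hj]
  rcases lt_or_eq_of_le hij with h | h
  · exact List.Pairwise.rel_get_of_lt (Finset.pairwise_sort (s := S) (r := (· ≤ ·)))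
      (a := ⟨i, by rw [Finset.length_sort]; exact hi⟩)
      (b := ⟨j, by rw [Finset.length_sort]; exact hj⟩) (by simpa using h)
  · subst h; exact le_refl _

lemma exists_sortedNth_eq {S : Finset ℝ} {a : ℝ} (ha : a ∈ S) :
    ∃ i, i < S.card ∧ sortedNth S i = a := by
  have : a ∈ S.sort (· ≤ ·) := (Finset.mem_sort _).2 ha
  obtain ⟨i, hi, hget⟩ := List.getElem_of_mem this
  have hic : i < S.card := by rw [Finset.length_sort] at hi; exact hi
  exact ⟨i, hic, by rw [sortedNth_eq_getElem hic]; exact hget⟩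


/-! ### Section C : ell and leftD basics -/

lemma leftD_le_iff {f : ℝ → ℝ} {x β : ℝ} :
    leftD f x ≤ (β : EReal) ↔ ∀ δ : ℝ, 0 < δ → δ ≤ x → (f x - f (x - δ)) / δ ≤ β := by
  rw [leftD, iSup_le_iff]
  constructor
  · intro h δ h1 h2
    exact EReal.coe_le_coe_iff.1 (h ⟨δ, h1, h2⟩)
  · intro h ⟨δ, h1, h2⟩
    exact EReal.coe_le_coe_iff.2 (h δ h1 h2)

lemma leftD_zero_le {f : ℝ → ℝ} {β : ℝ} : leftD f 0 ≤ (β : EReal) :=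
  leftD_le_iff.2 (fun δ h1 h2 => absurd (lt_of_lt_of_le h1 h2) (lt_irrefl 0))

lemma ellSet_nonempty {f : ℝ → ℝ} {β : ℝ} :
    {x ∈ unitI | leftD f x ≤ (β : EReal)}.Nonempty :=
  ⟨0, ⟨le_refl 0, zero_le_one⟩, leftD_zero_le⟩

lemma ellSet_bddAbove {f : ℝ → ℝ} {β : ℝ} :
    BddAbove {x ∈ unitI | leftD f x ≤ (β : EReal)} :=
  ⟨1, fun x hx => hx.1.2⟩

lemma ell_mem_unitI {f : ℝ → ℝ} {β : ℝ} : ell f β ∈ unitI := by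
  constructor
  · exact le_csSup ellSet_bddAbove ⟨⟨le_refl 0, zero_le_one⟩, leftD_zero_le⟩
  · exact csSup_le ellSet_nonempty (fun x hx => hx.1.2)

lemma ell_nonneg {f : ℝ → ℝ} {β : ℝ} : 0 ≤ ell f β := ell_mem_unitI.1
lemma ell_le_one {f : ℝ → ℝ} {β : ℝ} : ell f β ≤ 1 := ell_mem_unitI.2

lemma ell_mono {f : ℝ → ℝ} {β β' : ℝ} (h : β ≤ β') : ell f β ≤ ell f β' :=
  csSup_le_csSup ellSet_bddAbove ellSet_nonempty
    (fun x hx => ⟨hx.1, le_trans hx.2 (EReal.coe_le_coe_iff.2 h)⟩)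

lemma le_ell {f : ℝ → ℝ} {β x : ℝ} (hx : x ∈ unitI) (h : leftD f x ≤ (β : EReal)) :
    x ≤ ell f β :=
  le_csSup ellSet_bddAbove ⟨hx, h⟩

lemma leftD_gt_of_ell_lt {f : ℝ → ℝ} {β y : ℝ} (hy : y ∈ unitI) (h : ell f β < y) :
    (β : EReal) < leftD f y := by
  by_contra hc
  exact absurd (le_ell hy (not_lt.1 hc)) (not_le.2 h)


/-! ### Section D1 : knots -/

lemma discKnot_zero (f : ℝ → ℝ) (S : Finset ℝ) : discKnot f S 0 = 0 := by
  simp [discKnot]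

lemma discKnot_of_ge (f : ℝ → ℝ) (S : Finset ℝ) {i : ℕ} (h0 : i ≠ 0) (hi : S.card ≤ i) :
    discKnot f S i = 1 := by
  simp [discKnot, h0, not_lt.2 hi]

lemma discKnot_card (f : ℝ → ℝ) (S : Finset ℝ) (hS : S.Nonempty) :
    discKnot f S S.card = 1 :=
  discKnot_of_ge f S (by have := Finset.card_pos.2 hS; omega) (le_refl _)

lemma discKnot_mem_unitI (f : ℝ → ℝ) (S : Finset ℝ) (i : ℕ) : discKnot f S i ∈ unitI := by
  unfold discKnot
  split
  · exact ⟨le_refl 0, zero_le_one⟩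
  · split
    · exact ell_mem_unitI
    · exact ⟨zero_le_one, le_refl 1⟩

lemma discKnot_succ_of_lt (f : ℝ → ℝ) (S : Finset ℝ) {i : ℕ} (hi : i + 1 < S.card) :
    discKnot f S (i + 1) = ell f (sortedNth S i) := by
  simp [discKnot, hi]

lemma discKnot_mono_succ (f : ℝ → ℝ) (S : Finset ℝ) (i : ℕ) :
    discKnot f S i ≤ discKnot f S (i + 1) := by
  rcases Nat.eq_zero_or_pos i with h0 | h0
  · subst h0
    rw [discKnot_zero]
    exact (discKnot_mem_unitI f S 1).1
  · by_cases h1 : i + 1 < S.card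
    · have h2 : i < S.card := by omega
      have : discKnot f S i = ell f (sortedNth S (i - 1)) := by
        simp [discKnot, Nat.pos_iff_ne_zero.1 h0, h2]
      rw [this, discKnot_succ_of_lt f S h1]
      exact ell_mono (sortedNth_mono (Nat.sub_le i 1) h2)
    · rw [discKnot_of_ge f S (i := i + 1) (by omega) (by omega)]
      exact (discKnot_mem_unitI f S i).2

lemma discKnot_mono (f : ℝ → ℝ) (S : Finset ℝ) : Monotone (discKnot f S) := by
  exact monotone_nat_of_le_succ (discKnot_mono_succ f S)

/-! ### Section D2 : disc basics -/

lemma sortedNth_le_max {S : Finset ℝ} {β : ℝ} (hβ : β ∈ S) : β ≤ sortedNth S (S.card - 1) := by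
  obtain ⟨i, hi, rfl⟩ := exists_sortedNth_eq hβ
  exact sortedNth_mono (by omega) (by omega)

lemma disc_mono {f : ℝ → ℝ} {S : Finset ℝ} (hnn : ∀ a ∈ S, 0 ≤ a) : Monotone (disc f S) := by
  intro x y hxy
  unfold disc
  apply add_le_add le_rfl
  apply Finset.sum_le_sum
  intro i hi
  exact mul_le_mul_of_nonneg_left
    (min_diff_mono hxy (discKnot_mono_succ f S i))
    (hnn _ (sortedNth_mem (Finset.mem_range.1 hi)))

lemma disc_continuous (f : ℝ → ℝ) (S : Finset ℝ) : Continuous (disc f S) := by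
  unfold disc
  exact continuous_const.add (continuous_finset_sum _ (fun i _ =>
    continuous_const.mul ((continuous_id.min continuous_const).sub
      (continuous_id.min continuous_const))))

lemma disc_zero (f : ℝ → ℝ) (S : Finset ℝ) : disc f S 0 = f 0 := by
  unfold disc
  have h : ∀ i ∈ Finset.range S.card,
      sortedNth S i * (min 0 (discKnot f S (i+1)) - min 0 (discKnot f S i)) = 0 := by
    intro i _
    rw [min_eq_left (discKnot_mem_unitI f S (i+1)).1, min_eq_left (discKnot_mem_unitI f S i).1]
    ring
  rw [Finset.sum_congr rfl h]
  simp

lemma disc_telescope {f : ℝ → ℝ} {S : Finset ℝ} (hS : S.Nonempty) {x : ℝ} (hx : x ∈ unitI) :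
    ∑ i ∈ Finset.range S.card, (min x (discKnot f S (i+1)) - min x (discKnot f S i)) = x := by
  rw [Finset.sum_range_sub (fun i => min x (discKnot f S i))]
  rw [discKnot_card f S hS, discKnot_zero]
  rw [min_eq_left hx.2, min_eq_right hx.1]
  ring

lemma disc_diff {f : ℝ → ℝ} {S : Finset ℝ} (y c : ℝ) :
    disc f S c - disc f S y = ∑ i ∈ Finset.range S.card,
      sortedNth S i * ((min c (discKnot f S (i+1)) - min c (discKnot f S i))
        - (min y (discKnot f S (i+1)) - min y (discKnot f S i))) := by
  calc disc f S c - disc f S y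
      = ∑ i ∈ Finset.range S.card,
          sortedNth S i * (min c (discKnot f S (i+1)) - min c (discKnot f S i))
        - ∑ i ∈ Finset.range S.card,
          sortedNth S i * (min y (discKnot f S (i+1)) - min y (discKnot f S i)) := by
        unfold disc; ring
    _ = ∑ i ∈ Finset.range S.card,
          (sortedNth S i * (min c (discKnot f S (i+1)) - min c (discKnot f S i))
            - sortedNth S i * (min y (discKnot f S (i+1)) - min y (discKnot f S i))) :=
        (Finset.sum_sub_distrib _ _).symm
    _ = _ := Finset.sum_congr rfl (fun i _ => by ring)

lemma key1 {f : ℝ → ℝ} {S : Finset ℝ} {β : ℝ} (hβ : β ∈ S) {i : ℕ} (hi : i < S.card)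
    (h : discKnot f S i < ell f β) : sortedNth S i ≤ β := by
  by_contra hc
  push_neg at hc
  obtain ⟨i₀, hi₀, hi₀e⟩ := exists_sortedNth_eq hβ
  have hii : i₀ < i := by
    by_contra hii
    push_neg at hii
    exact absurd (sortedNth_mono hii hi₀) (not_le.2 (by rw [hi₀e]; exact hc))
  have hzi : discKnot f S i = ell f (sortedNth S (i - 1)) := by
    rw [discKnot, if_neg (by omega), if_pos hi]
  have : ell f β ≤ discKnot f S i := by
    rw [hzi, ← hi₀e]
    exact ell_mono (sortedNth_mono (by omega) (by omega))
  exact absurd this (not_le.2 h)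

lemma key2 {f : ℝ → ℝ} {S : Finset ℝ} {β : ℝ} (hβ : β ∈ S) {i : ℕ} (hi : i < S.card)
    (h : ell f β < discKnot f S (i+1)) : β ≤ sortedNth S i := by
  by_contra hc
  push_neg at hc
  obtain ⟨i₀, hi₀, hi₀e⟩ := exists_sortedNth_eq hβ
  have hii : i < i₀ := by
    by_contra hii
    push_neg at hii
    exact absurd (sortedNth_mono hii hi) (not_le.2 (by rw [hi₀e]; exact hc))
  have hi1 : i + 1 < S.card := by omega
  have : discKnot f S (i+1) ≤ ell f β := by
    rw [discKnot_succ_of_lt f S hi1, ← hi₀e]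
    exact ell_mono (sortedNth_mono (by omega) hi₀)
  exact absurd this (not_le.2 h)

/-- P1 : increments of `disc` up to `ℓ(f|β)` are at most `β` per unit. -/
lemma disc_incr_le {f : ℝ → ℝ} {S : Finset ℝ} {β : ℝ} (hβ : β ∈ S) (hS : S.Nonempty)
    {y : ℝ} (hy : y ∈ unitI) (hyζ : y ≤ ell f β) :
    disc f S (ell f β) - disc f S y ≤ β * (ell f β - y) := by
  set ζ := ell f β with hζ
  rw [disc_diff]
  have hstep : ∀ i ∈ Finset.range S.card,
      sortedNth S i * ((min ζ (discKnot f S (i+1)) - min ζ (discKnot f S i))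
        - (min y (discKnot f S (i+1)) - min y (discKnot f S i)))
      ≤ β * ((min ζ (discKnot f S (i+1)) - min ζ (discKnot f S i))
        - (min y (discKnot f S (i+1)) - min y (discKnot f S i))) := by
    intro i hi
    rcases lt_or_ge (discKnot f S i) ζ with h | h
    · exact mul_le_mul_of_nonneg_right (key1 hβ (Finset.mem_range.1 hi) h)
        (by have := min_diff_mono hyζ (discKnot_mono_succ f S i); linarith)
    · rw [min_diff_zero_of_ge h hyζ (discKnot_mono_succ f S i)]
      simp
  calc _ ≤ ∑ i ∈ Finset.range S.card,
      β * ((min ζ (discKnot f S (i+1)) - min ζ (discKnot f S i))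
        - (min y (discKnot f S (i+1)) - min y (discKnot f S i))) := Finset.sum_le_sum hstep
    _ = β * (ζ - y) := by
        rw [← Finset.mul_sum, Finset.sum_sub_distrib,
          disc_telescope hS (ell_mem_unitI), disc_telescope hS hy]

/-- P2 : increments of `disc` beyond `ℓ(f|β)` are at least `β` per unit. -/
lemma disc_incr_ge {f : ℝ → ℝ} {S : Finset ℝ} {β : ℝ} (hβ : β ∈ S) (hS : S.Nonempty)
    {c : ℝ} (hc : c ∈ unitI) (hζc : ell f β ≤ c) :
    β * (c - ell f β) ≤ disc f S c - disc f S (ell f β) := by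
  set ζ := ell f β with hζ
  rw [disc_diff]
  have hstep : ∀ i ∈ Finset.range S.card,
      β * ((min c (discKnot f S (i+1)) - min c (discKnot f S i))
        - (min ζ (discKnot f S (i+1)) - min ζ (discKnot f S i)))
      ≤ sortedNth S i * ((min c (discKnot f S (i+1)) - min c (discKnot f S i))
        - (min ζ (discKnot f S (i+1)) - min ζ (discKnot f S i))) := by
    intro i hi
    rcases lt_or_ge ζ (discKnot f S (i+1)) with h | h
    · exact mul_le_mul_of_nonneg_right (key2 hβ (Finset.mem_range.1 hi) h)
        (by have := min_diff_mono hζc (discKnot_mono_succ f S i); linarith)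
    · rw [min_diff_zero_of_le (discKnot_mono_succ f S i) h hζc]
      simp
  calc β * (c - ζ) = ∑ i ∈ Finset.range S.card,
      β * ((min c (discKnot f S (i+1)) - min c (discKnot f S i))
        - (min ζ (discKnot f S (i+1)) - min ζ (discKnot f S i))) := by
        rw [← Finset.mul_sum, Finset.sum_sub_distrib,
          disc_telescope hS hc, disc_telescope hS (ell_mem_unitI)]
    _ ≤ _ := Finset.sum_le_sum hstep

/-- P3 : `disc f S` dominates `f` at the points `ℓ(f|β)`, `β ∈ S`. -/
lemma f_le_disc {f : ℝ → ℝ} {S : Finset ℝ} {β : ℝ} (hβ : β ∈ S)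
    (hf_incr : ∀ γ ∈ S, ∀ d c : ℝ, 0 ≤ d → d ≤ c → c ≤ ell f γ → f c - f d ≤ γ * (c - d)) :
    f (ell f β) ≤ disc f S (ell f β) := by
  have hS : S.Nonempty := ⟨β, hβ⟩
  set ζ := ell f β with hζ
  have hζu : ζ ∈ unitI := ell_mem_unitI
  have htel : f ζ - f 0 = ∑ i ∈ Finset.range S.card,
      (f (min ζ (discKnot f S (i+1))) - f (min ζ (discKnot f S i))) := by
    rw [Finset.sum_range_sub (fun i => f (min ζ (discKnot f S i)))]
    rw [discKnot_card f S hS, discKnot_zero, min_eq_left hζu.2, min_eq_right hζu.1]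
  have hstep : ∀ i ∈ Finset.range S.card,
      f (min ζ (discKnot f S (i+1))) - f (min ζ (discKnot f S i))
      ≤ sortedNth S i * (min ζ (discKnot f S (i+1)) - min ζ (discKnot f S i)) := by
    intro i hi
    have hic := Finset.mem_range.1 hi
    apply hf_incr _ (sortedNth_mem hic)
    · exact le_min hζu.1 (discKnot_mem_unitI f S i).1
    · exact min_le_min (le_refl ζ) (discKnot_mono_succ f S i)
    · rcases lt_or_ge (i+1) S.card with h | h
      · rw [discKnot_succ_of_lt f S h]
        exact min_le_of_right_le (le_refl _)
      · calc min ζ (discKnot f S (i+1)) ≤ ζ := min_le_left _ _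
          _ ≤ ell f (sortedNth S i) := by
              rw [hζ]
              apply ell_mono
              have : i = S.card - 1 := by omega
              rw [this]
              exact sortedNth_le_max hβ
  calc f ζ = f 0 + (f ζ - f 0) := by ring
    _ ≤ f 0 + ∑ i ∈ Finset.range S.card,
        sortedNth S i * (min ζ (discKnot f S (i+1)) - min ζ (discKnot f S i)) := by
        rw [htel]
        exact add_le_add le_rfl (Finset.sum_le_sum hstep)
    _ = disc f S ζ := rfl


/-! ### Section D3 : convexity & piecewise linearity tools -/

lemma abel_sum (A M : ℕ → ℝ) (k : ℕ) (hk : 1 ≤ k) :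
    ∑ l ∈ Finset.range k, A l * (M (l+1) - M l)
      = A (k-1) * M k - A 0 * M 0 - ∑ l ∈ Finset.range (k-1), (A (l+1) - A l) * M (l+1) := by
  induction k with
  | zero => omega
  | succ n ih =>
    rcases Nat.eq_zero_or_pos n with h0 | h0
    · subst h0; simp; ring
    · rw [Finset.sum_range_succ, ih h0]
      have h2 : n - 1 + 1 = n := by omega
      have h1 : n + 1 - 1 = n := rfl
      rw [h1]
      rw [show Finset.range n = Finset.range (n-1+1) by rw [h2]]
      rw [Finset.sum_range_succ, h2]
      ring

lemma convexOn_affine (a c : ℝ) : ConvexOn ℝ (Set.univ : Set ℝ) (fun x : ℝ => a * x + c) := by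
  refine ⟨convex_univ, fun x _ y _ s t hs ht hst => le_of_eq ?_⟩
  simp only [smul_eq_mul]
  linear_combination (-c) * hst

lemma convexOn_negid : ConvexOn ℝ (Set.univ : Set ℝ) (fun x : ℝ => -x) := by
  have := convexOn_affine (-1) 0
  simpa using this

lemma ConvexOn.congr'' {s : Set ℝ} {g h : ℝ → ℝ} (hg : ConvexOn ℝ s g)
    (he : ∀ x ∈ s, g x = h x) : ConvexOn ℝ s h := by
  refine ⟨hg.1, fun x hx y hy a b ha hb hab => ?_⟩
  rw [← he x hx, ← he y hy, ← he _ (hg.1 hx hy ha hb hab)]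
  exact hg.2 hx hy ha hb hab

lemma convexOn_wmaxneg (z w : ℝ) (hw : 0 ≤ w) :
    ConvexOn ℝ (Set.univ : Set ℝ) (fun x : ℝ => w * max (-x) (-z)) := by
  have h1 : ConvexOn ℝ (Set.univ : Set ℝ)
      ((fun x : ℝ => -x) ⊔ (fun _ : ℝ => -z)) :=
    convexOn_negid.sup (convexOn_const _ convex_univ)
  have h2 := h1.smul hw
  exact ConvexOn.congr'' h2 (fun x _ => by simp [Pi.sup_apply, smul_eq_mul])

lemma max_neg_neg' (a b : ℝ) : max (-a) (-b) = -min a b := by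
  rcases le_total a b with h | h <;>
    simp [min_eq_left, min_eq_right, max_eq_left, max_eq_right, neg_le_neg, h]


lemma convexOn_sum_univ {N : ℕ} (F : ℕ → ℝ → ℝ)
    (hF : ∀ l < N, ConvexOn ℝ (Set.univ : Set ℝ) (F l)) :
    ConvexOn ℝ (Set.univ : Set ℝ) (fun x => ∑ l ∈ Finset.range N, F l x) := by
  induction N with
  | zero => simpa using convexOn_const (0:ℝ) convex_univ
  | succ n ih =>
    have h2 := (ih (fun l hl => hF l (by omega))).add (hF n (by omega))
    exact ConvexOn.congr'' h2 (fun x _ => by simp [Finset.sum_range_succ])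

lemma disc_convexOn {f : ℝ → ℝ} {S : Finset ℝ} (hnn : ∀ a ∈ S, 0 ≤ a) :
    ConvexOn ℝ unitI (disc f S) := by
  rcases Nat.eq_zero_or_pos S.card with hk | hk
  · have : ∀ x ∈ unitI, f 0 = disc f S x := by
      intro x _
      unfold disc
      rw [hk]
      simp
    exact ConvexOn.congr'' (convexOn_const (f 0) (convex_Icc 0 1)) this
  · have hSne : S.Nonempty := Finset.card_pos.1 hk
    set G : ℝ → ℝ := fun x => (sortedNth S (S.card-1) * x + f 0) +
        (sortedNth S 0 * max (-x) (-(0:ℝ)) +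
          ∑ l ∈ Finset.range (S.card-1),
            (sortedNth S (l+1) - sortedNth S l) * max (-x) (-(discKnot f S (l+1)))) with hG
    have hGconv : ConvexOn ℝ (Set.univ : Set ℝ) G := by
      apply ConvexOn.add (convexOn_affine _ _)
      apply ConvexOn.add (convexOn_wmaxneg _ _ (hnn _ (sortedNth_mem (by omega))))
      apply convexOn_sum_univ
      intro l hl
      apply convexOn_wmaxneg
      have := sortedNth_mono (by omega : l ≤ l + 1) (by omega : l + 1 < S.card)
      linarith
    have hEq : ∀ x ∈ unitI, G x = disc f S x := by
      intro x hx
      unfold disc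
      rw [abel_sum (sortedNth S) (fun l => min x (discKnot f S l)) S.card hk]
      rw [discKnot_card f S hSne, discKnot_zero, min_eq_left hx.2]
      simp only [hG, max_neg_neg']
      have : ∑ l ∈ Finset.range (S.card-1),
            (sortedNth S (l+1) - sortedNth S l) * -min x (discKnot f S (l+1))
          = -∑ l ∈ Finset.range (S.card-1),
            (sortedNth S (l+1) - sortedNth S l) * min x (discKnot f S (l+1)) := by
        rw [← Finset.sum_neg_distrib]
        exact Finset.sum_congr rfl (fun l _ => by ring)
      rw [this]
      ring
    exact ConvexOn.congr''
      (ConvexOn.subset hGconv (Set.subset_univ _) (convex_Icc 0 1)) hEq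

lemma disc_piecewiseLinearOn (f : ℝ → ℝ) (S : Finset ℝ) : PiecewiseLinearOn (disc f S) := by
  rcases Nat.eq_zero_or_pos S.card with hk | hk
  · refine ⟨1, fun i => (i.val : ℝ), ?_, by simp, by simp [Fin.last], ?_⟩
    · intro a b hab
      exact_mod_cast Nat.cast_le.2 (Fin.le_iff_val_le_val.1 hab)
    · intro i
      refine ⟨0, f 0, fun x hx => ?_⟩
      unfold disc
      rw [hk]
      simp
  · refine ⟨S.card, fun i => discKnot f S i.val, ?_, ?_, ?_, ?_⟩
    · intro a b hab
      exact discKnot_mono f S (Fin.le_iff_val_le_val.1 hab)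
    · exact discKnot_zero f S
    · exact discKnot_card f S (Finset.card_pos.1 hk)
    · intro i
      set z : ℕ → ℝ := discKnot f S with hz
      set A : ℕ → ℝ := sortedNth S with hA
      refine ⟨A i.val, f 0 + (∑ r ∈ Finset.range i.val, A r * (z (r+1) - z r)) - A i.val * z i.val,
        fun x hx => ?_⟩
      have hxi : z i.val ≤ x := hx.1
      have hxi1 : x ≤ z (i.val + 1) := hx.2
      unfold disc
      have hsplit : Finset.range S.card = Finset.Ico 0 S.card := by
        rw [Finset.range_eq_Ico]
      rw [hsplit, ← Finset.sum_Ico_consecutive _ (by omega : 0 ≤ i.val + 1)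
        (by omega : i.val + 1 ≤ S.card)]
      rw [← Finset.range_eq_Ico, Finset.sum_range_succ]
      have hpre : ∀ r ∈ Finset.range i.val,
          A r * (min x (z (r+1)) - min x (z r)) = A r * (z (r+1) - z r) := by
        intro r hr
        have hr' := Finset.mem_range.1 hr
        have h1 : z (r+1) ≤ x := le_trans (discKnot_mono f S (by omega : r+1 ≤ i.val)) hxi
        have h2 : z r ≤ x := le_trans (discKnot_mono f S (by omega : r ≤ r+1)) h1
        rw [min_eq_right h1, min_eq_right h2]
      have hmid : A i.val * (min x (z (i.val+1)) - min x (z i.val))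
          = A i.val * (x - z i.val) := by
        rw [min_eq_left hxi1, min_eq_right hxi]
      have hsuf : ∀ r ∈ Finset.Ico (i.val+1) S.card,
          A r * (min x (z (r+1)) - min x (z r)) = 0 := by
        intro r hr
        have hr' := Finset.mem_Ico.1 hr
        have h1 : x ≤ z r := le_trans hxi1 (discKnot_mono f S (by omega : i.val+1 ≤ r))
        have h2 : x ≤ z (r+1) := le_trans h1 (discKnot_mono f S (by omega : r ≤ r+1))
        rw [min_eq_left h1, min_eq_left h2]
        ring
      rw [Finset.sum_congr rfl hpre, hmid, Finset.sum_eq_zero hsuf]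
      ring


/-! ### Section E : properties of the convex hull of a pricing function -/

section E
variable {p : ℝ → ℝ}

/-- Any affine lower bound of `p` on `[0,1]` is a lower bound on the convex hull
of the epigraph. -/
lemma hull_lb (a c : ℝ) (hpt : ∀ u ∈ unitI, a * u + c ≤ p u) :
    ∀ q ∈ convexHull ℝ (epigraph unitI p), a * q.1 + c ≤ q.2 := by
  have hlin : IsLinearMap ℝ (fun q : ℝ × ℝ => a * q.1 - q.2) := by
    constructor
    · intro q r; simp; ring
    · intro s q; simp [smul_eq_mul]; ring
  have hconv : Convex ℝ {q : ℝ × ℝ | a * q.1 - q.2 ≤ -c} := convex_halfSpace_le hlin (-c)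
  have hsub : epigraph unitI p ⊆ {q : ℝ × ℝ | a * q.1 - q.2 ≤ -c} := by
    intro q hq
    have := hpt q.1 hq.1
    have := hq.2
    simp only [Set.mem_setOf_eq]
    linarith
  intro q hq
  have := convexHull_min hsub hconv hq
  simp only [Set.mem_setOf_eq] at this
  linarith

lemma sec_nonempty {x : ℝ} (hx : x ∈ unitI) :
    ((x, p x) ∈ convexHull ℝ (epigraph unitI p)) :=
  subset_convexHull ℝ _ ⟨hx, le_refl _⟩

lemma fch_lb (hnn : ∀ u ∈ unitI, 0 ≤ p u) (a c : ℝ) (hpt : ∀ u ∈ unitI, a * u + c ≤ p u)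
    {x : ℝ} (hx : x ∈ unitI) : a * x + c ≤ funConvHull unitI p x := by
  apply le_csInf ⟨p x, sec_nonempty hx⟩
  intro y hy
  exact hull_lb a c hpt (x, y) hy

lemma sec_bddBelow (hnn : ∀ u ∈ unitI, 0 ≤ p u) (x : ℝ) :
    BddBelow {y : ℝ | (x, y) ∈ convexHull ℝ (epigraph unitI p)} := by
  refine ⟨0, fun y hy => ?_⟩
  have := hull_lb (p := p) 0 0 (fun u hu => by simpa using hnn u hu) (x, y) hy
  simpa using this

lemma fch_nonneg (hnn : ∀ u ∈ unitI, 0 ≤ p u) {x : ℝ} (hx : x ∈ unitI) :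
    0 ≤ funConvHull unitI p x := by
  have := fch_lb hnn 0 0 (fun u hu => by simpa using hnn u hu) hx
  simpa using this

lemma fch_le (hnn : ∀ u ∈ unitI, 0 ≤ p u) {x : ℝ} (hx : x ∈ unitI) :
    funConvHull unitI p x ≤ p x :=
  csInf_le (sec_bddBelow hnn x) (sec_nonempty hx)

lemma fch_zero (hnn : ∀ u ∈ unitI, 0 ≤ p u) (hp0 : p 0 = 0) :
    funConvHull unitI p 0 = 0 := by
  have h1 := fch_le hnn (x := 0) ⟨le_refl 0, zero_le_one⟩
  have h2 := fch_nonneg hnn (x := 0) ⟨le_refl 0, zero_le_one⟩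
  rw [hp0] at h1
  linarith

lemma fch_convexOn (hnn : ∀ u ∈ unitI, 0 ≤ p u) :
    ConvexOn ℝ unitI (funConvHull unitI p) := by
  refine ⟨convex_Icc 0 1, fun x hx y hy s t hs ht hst => ?_⟩
  rcases eq_or_lt_of_le hs with hs0 | hs0
  · have ht1 : t = 1 := by linarith
    simp [← hs0, ht1]
  rcases eq_or_lt_of_le ht with ht0 | ht0
  · have hs1 : s = 1 := by linarith
    simp [← ht0, hs1]
  have key : ∀ u, (x, u) ∈ convexHull ℝ (epigraph unitI p) →
      ∀ w, (y, w) ∈ convexHull ℝ (epigraph unitI p) →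
      funConvHull unitI p (s • x + t • y) ≤ s * u + t * w := by
    intro u hu w hw
    have hmem : s • ((x, u) : ℝ × ℝ) + t • ((y, w) : ℝ × ℝ)
        ∈ convexHull ℝ (epigraph unitI p) :=
      (convex_convexHull ℝ _) hu hw hs ht hst
    have heq : ((s • x + t • y, s * u + t * w) : ℝ × ℝ)
        = s • ((x, u) : ℝ × ℝ) + t • ((y, w) : ℝ × ℝ) := by
      simp [Prod.ext_iff, smul_eq_mul]
    apply csInf_le (sec_bddBelow hnn _)
    show (s • x + t • y, s * u + t * w) ∈ convexHull ℝ (epigraph unitI p)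
    rw [heq]
    exact hmem
  have step1 : ∀ w, (y, w) ∈ convexHull ℝ (epigraph unitI p) →
      funConvHull unitI p (s • x + t • y) ≤ s * funConvHull unitI p x + t * w := by
    intro w hw
    have h1 : ∀ u ∈ {u : ℝ | (x, u) ∈ convexHull ℝ (epigraph unitI p)},
        (funConvHull unitI p (s • x + t • y) - t * w) / s ≤ u := by
      intro u hu
      rw [div_le_iff₀ hs0]
      have := key u hu w hw
      linarith
    have h2 := le_csInf ⟨p x, sec_nonempty hx⟩ h1
    rw [div_le_iff₀ hs0] at h2
    have : funConvHull unitI p x = sInf {u : ℝ | (x, u) ∈ convexHull ℝ (epigraph unitI p)} := rfl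
    rw [← this] at h2
    linarith
  have h3 : ∀ w ∈ {w : ℝ | (y, w) ∈ convexHull ℝ (epigraph unitI p)},
      (funConvHull unitI p (s • x + t • y) - s * funConvHull unitI p x) / t ≤ w := by
    intro w hw
    rw [div_le_iff₀ ht0]
    have := step1 w hw
    linarith
  have h4 := le_csInf ⟨p y, sec_nonempty hy⟩ h3
  rw [div_le_iff₀ ht0] at h4
  have : funConvHull unitI p y = sInf {w : ℝ | (y, w) ∈ convexHull ℝ (epigraph unitI p)} := rfl
  rw [← this] at h4
  simp only [smul_eq_mul] at h4 ⊢
  linarith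

lemma fch_monotoneOn (hnn : ∀ u ∈ unitI, 0 ≤ p u) (hp0 : p 0 = 0) :
    MonotoneOn (funConvHull unitI p) unitI := by
  intro x hx y hy hxy
  rcases eq_or_lt_of_le hy.1 with hy0 | hy0
  · have hx0 : x = 0 := le_antisymm (by rw [hy0]; exact hxy) hx.1
    rw [hx0, ← hy0]
  · have hcv := fch_convexOn hnn
    have hmem0 : (0:ℝ) ∈ unitI := ⟨le_refl 0, zero_le_one⟩
    have hb0 : 0 ≤ x / y := div_nonneg hx.1 (le_of_lt hy0)
    have hb1 : x / y ≤ 1 := (div_le_one hy0).2 hxy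
    have hcomb := hcv.2 hmem0 hy (by linarith : (0:ℝ) ≤ 1 - x / y) hb0 (by ring)
    have hpt : (1 - x / y) • (0:ℝ) + (x / y) • y = x := by
      have hy0' := hy0.ne'; simp only [smul_eq_mul, mul_zero, zero_add]; field_simp
    rw [hpt] at hcomb
    rw [fch_zero hnn hp0] at hcomb
    have hfy := fch_nonneg hnn hy
    have := fch_nonneg hnn hx
    simp only [smul_eq_mul] at hcomb
    nlinarith

end E


section E2
variable {p : ℝ → ℝ}

lemma mlc_near_one (hlc : LowerContOn unitI p) {ε : ℝ} (hε : 0 < ε) :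
    ∃ x₀, 0 ≤ x₀ ∧ x₀ < 1 ∧ p 1 - ε ≤ p x₀ := by
  have h := hlc 1 ⟨zero_le_one, le_refl 1⟩
  have hlt : ((p 1 - ε : ℝ) : EReal) < lowerLim unitI p 1 := by
    rw [h]
    exact EReal.coe_lt_coe_iff.2 (by linarith)
  rw [lowerLim, lt_iSup_iff] at hlt
  obtain ⟨⟨δ, hδ⟩, hinf⟩ := hlt
  set x₀ : ℝ := max 0 (1 - δ) with hx₀
  have hx₀1 : x₀ < 1 := by
    apply max_lt zero_lt_one
    linarith
  have hx₀u : x₀ ∈ unitI := ⟨le_max_left _ _, by apply le_of_lt hx₀1⟩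
  have hx₀δ : ‖x₀ - 1‖ ≤ δ := by
    rw [Real.norm_eq_abs, abs_of_nonpos (by linarith)]
    have : 1 - δ ≤ x₀ := le_max_right _ _
    linarith
  have hle := iInf_le (fun x : {x : ℝ // x ∈ unitI ∧ ‖x - 1‖ ≤ δ} => (p x.1 : EReal))
    ⟨x₀, hx₀u, hx₀δ⟩
  have := lt_of_lt_of_le hinf hle
  exact ⟨x₀, hx₀u.1, hx₀1, le_of_lt (EReal.coe_lt_coe_iff.1 this)⟩

lemma fch_lc_lb (hnn : ∀ u ∈ unitI, 0 ≤ p u) (hmono : MonotoneOn p unitI)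
    {x₀ : ℝ} (h0 : 0 ≤ x₀) (h1 : x₀ < 1) {x : ℝ} (hx : x ∈ unitI) :
    p x₀ * (x - x₀) / (1 - x₀) ≤ funConvHull unitI p x := by
  have hden : (0:ℝ) < 1 - x₀ := by linarith
  have hx₀u : x₀ ∈ unitI := ⟨h0, le_of_lt h1⟩
  have hpx₀ : 0 ≤ p x₀ := hnn x₀ hx₀u
  have hpt : ∀ u ∈ unitI, (p x₀ / (1 - x₀)) * u + (-(p x₀ * x₀ / (1 - x₀))) ≤ p u := by
    intro u hu
    have hpu : 0 ≤ p u := hnn u hu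
    have heq : (p x₀ / (1 - x₀)) * u + (-(p x₀ * x₀ / (1 - x₀)))
        = p x₀ * (u - x₀) / (1 - x₀) := by field_simp; ring
    rw [heq, div_le_iff₀ hden]
    rcases le_total u x₀ with hc | hc
    · nlinarith
    · have h2 := hmono hx₀u hu hc
      nlinarith [hu.2, mul_le_mul_of_nonneg_right h2 (le_of_lt hden)]
  have := fch_lb hnn (p x₀ / (1 - x₀)) (-(p x₀ * x₀ / (1 - x₀))) hpt hx
  have heq : (p x₀ / (1 - x₀)) * x + (-(p x₀ * x₀ / (1 - x₀)))
      = p x₀ * (x - x₀) / (1 - x₀) := by field_simp; ring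
  linarith [heq ▸ this]

lemma slope_le_leftD {f : ℝ → ℝ} {d x : ℝ} (hd : 0 ≤ d) (hdx : d < x) :
    (((f x - f d) / (x - d) : ℝ) : EReal) ≤ leftD f x := by
  have h := le_iSup (fun δ : {δ : ℝ // 0 < δ ∧ δ ≤ x} =>
    (((f x - f (x - δ.1)) / δ.1 : ℝ) : EReal)) ⟨x - d, by constructor <;> linarith⟩
  simpa [leftD, show x - (x - d) = d by ring] using h

lemma leftD_le_bound {f : ℝ → ℝ} {d e β : ℝ} (h : leftD f e ≤ (β : EReal))
    (hd : 0 ≤ d) (hde : d ≤ e) : f e - f d ≤ β * (e - d) := by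
  rcases eq_or_lt_of_le hde with heq | hlt
  · subst heq; simp
  · have := leftD_le_iff.1 h (e - d) (by linarith) (by linarith)
    rw [show e - (e - d) = d by ring] at this
    rw [div_le_iff₀ (by linarith : (0:ℝ) < e - d)] at this
    linarith

lemma leftD_mono_cv {f : ℝ → ℝ} (hcv : ConvexOn ℝ unitI f) {c e : ℝ}
    (hc : c ∈ unitI) (he : e ∈ unitI) (hce : c ≤ e) : leftD f c ≤ leftD f e := by
  rcases eq_or_lt_of_le hce with heq | hlt
  · subst heq; exact le_refl _
  apply iSup_le
  rintro ⟨δ, hδ1, hδ2⟩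
  have hcd : c - δ ∈ unitI := ⟨by linarith [hc.1], by linarith [hc.2]⟩
  have h1 : (f c - f (c - δ)) / δ ≤ (f e - f c) / (e - c) := by
    have := hcv.slope_mono_adjacent hcd he (by linarith : c - δ < c) hlt
    rw [show c - (c - δ) = δ by ring] at this
    exact this
  calc (((f c - f (c - δ)) / δ : ℝ) : EReal)
      ≤ (((f e - f c) / (e - c) : ℝ) : EReal) := EReal.coe_le_coe_iff.2 h1
    _ ≤ leftD f e := slope_le_leftD hc.1 hlt

end E2

section E3
variable {p : ℝ → ℝ}

/-- Beyond `ℓ(f|β)` the convex hull grows at rate at least `β`. -/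
lemma fch_growth (hnn : ∀ u ∈ unitI, 0 ≤ p u) (hp0 : p 0 = 0)
    {β a : ℝ} (hβ : 0 ≤ β) (ha : a ∈ unitI)
    (hζa : ell (funConvHull unitI p) β ≤ a) :
    funConvHull unitI p (ell (funConvHull unitI p) β)
      + β * (a - ell (funConvHull unitI p) β) ≤ funConvHull unitI p a := by
  set f := funConvHull unitI p with hf
  set ζ := ell f β with hζ
  have hζu : ζ ∈ unitI := ell_mem_unitI
  have hcv : ConvexOn ℝ unitI f := fch_convexOn hnn
  have hfmono : MonotoneOn f unitI := fch_monotoneOn hnn hp0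
  rcases eq_or_lt_of_le hζa with heq | hζa'
  · rw [← heq]; simp
  have hstep : ∀ y, ζ < y → y ≤ a → f ζ - β * y ≤ f a - β * a := by
    intro y h1 h2
    have hyu : y ∈ unitI := ⟨le_trans hζu.1 (le_of_lt h1), le_trans h2 ha.2⟩
    have hβlt : (β : EReal) < leftD f y := leftD_gt_of_ell_lt hyu h1
    rw [leftD, lt_iSup_iff] at hβlt
    obtain ⟨⟨δ, hδ1, hδ2⟩, hs⟩ := hβlt
    have hslope : β < (f y - f (y - δ)) / δ := EReal.coe_lt_coe_iff.1 hs
    have hfζy : f ζ ≤ f y := hfmono hζu hyu (le_of_lt h1)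
    rcases eq_or_lt_of_le h2 with hya | hya
    · subst hya; linarith
    · have hydu : y - δ ∈ unitI := ⟨by linarith [hyu.1], by linarith [hyu.2]⟩
      have hadj := hcv.slope_mono_adjacent hydu ha (by linarith : y - δ < y) hya
      rw [show y - (y - δ) = δ by ring] at hadj
      have h3 : β < (f a - f y) / (a - y) := lt_of_lt_of_le hslope hadj
      rw [lt_div_iff₀ (by linarith : (0:ℝ) < a - y)] at h3
      nlinarith
  by_contra hcon
  push_neg at hcon
  rcases eq_or_lt_of_le hβ with hβ0 | hβ0
  · have hthis := hstep a hζa' (le_refl a)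
    rw [← hβ0] at hthis hcon
    simp at hthis hcon
    linarith
  · have hβne : β ≠ 0 := ne_of_gt hβ0
    set d : ℝ := (f ζ - β * ζ) - (f a - β * a) with hd
    have hdpos : 0 < d := by rw [hd]; nlinarith
    set y : ℝ := min a (ζ + d / (2 * β)) with hy
    have h1 : ζ < y := by
      apply lt_min hζa'
      have : 0 < d / (2 * β) := div_pos hdpos (by linarith)
      linarith
    have h2 : y ≤ a := min_le_left _ _
    have h3 := hstep y h1 h2
    have h4 : β * y ≤ β * (ζ + d / (2 * β)) :=
      mul_le_mul_of_nonneg_left (min_le_right _ _) hβ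
    have h5 : β * (ζ + d / (2 * β)) = β * ζ + d / 2 := by field_simp
    rw [h5] at h4
    linarith

/-- Left continuity (from below) of the convex hull at any point of `[0,1]`. -/
lemma fch_left_cont (hnn : ∀ u ∈ unitI, 0 ≤ p u)
    (hmono : MonotoneOn p unitI) (hlc : LowerContOn unitI p)
    {c : ℝ} (hcu : c ∈ unitI) {ε : ℝ} (hε : 0 < ε) :
    ∃ γ > 0, ∀ e, e ∈ unitI → c - γ ≤ e → e ≤ c →
      funConvHull unitI p c - funConvHull unitI p e ≤ ε := by
  set f := funConvHull unitI p with hf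
  have hcv : ConvexOn ℝ unitI f := fch_convexOn hnn
  have hp1 : 0 ≤ p 1 := hnn 1 ⟨zero_le_one, le_refl 1⟩
  have h1u : (1:ℝ) ∈ unitI := ⟨zero_le_one, le_refl 1⟩
  rcases eq_or_lt_of_le hcu.2 with hceq | hclt
  · -- c = 1
    subst hceq
    obtain ⟨x₀, hx₀0, hx₀1, hx₀p⟩ := mlc_near_one hlc (show (0:ℝ) < ε/2 by linarith)
    have hden : (0:ℝ) < 1 - x₀ := by linarith
    have hpx₀0 : 0 ≤ p x₀ := hnn x₀ ⟨hx₀0, le_of_lt hx₀1⟩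
    have hpx₀1 : p x₀ ≤ p 1 := hmono ⟨hx₀0, le_of_lt hx₀1⟩ h1u (le_of_lt hx₀1)
    obtain ⟨γ, hγpos, hγeq⟩ : ∃ γ : ℝ, 0 < γ ∧ γ * (p 1 + 1) = (ε/2) * (1 - x₀) :=
      ⟨(ε/2) * (1 - x₀) / (p 1 + 1),
        div_pos (mul_pos (by linarith) hden) (by linarith),
        by field_simp <;> ring⟩
    refine ⟨γ, hγpos, fun e he h1 h2 => ?_⟩
    have hfe := fch_lc_lb hnn hmono hx₀0 hx₀1 he
    have hf1 : f 1 ≤ p 1 := fch_le hnn h1u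
    have e1 : p x₀ * (1 - e) ≤ p 1 * γ := by
      apply mul_le_mul hpx₀1 (by linarith) (by linarith [he.2]) hp1
    have e2 : p x₀ * (1 - e) / (1 - x₀) ≤ p 1 * γ / (1 - x₀) :=
      (div_le_div_iff_of_pos_right hden).2 e1
    have e3 : p 1 * γ / (1 - x₀) ≤ ε/2 := by
      rw [div_le_iff₀ hden]
      nlinarith
    have e4 : p x₀ * (e - x₀) / (1 - x₀) = p x₀ - p x₀ * (1 - e) / (1 - x₀) := by
      have hne : (1:ℝ) - x₀ ≠ 0 := ne_of_gt hden
      field_simp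
      ring
    rw [e4] at hfe
    linarith
  · -- c < 1
    obtain ⟨c', hcc', hc'1⟩ : ∃ c' : ℝ, c < c' ∧ c' ≤ 1 := ⟨(c+1)/2, by linarith, by linarith⟩
    have hc'u : c' ∈ unitI := ⟨le_trans hcu.1 (le_of_lt hcc'), hc'1⟩
    obtain ⟨γ, hγpos, hγeq⟩ : ∃ γ : ℝ, 0 < γ ∧ γ * (p 1 + 1) = ε * (c' - c) :=
      ⟨ε * (c' - c) / (p 1 + 1),
        div_pos (mul_pos hε (by linarith)) (by linarith),
        by field_simp <;> ring⟩
    refine ⟨γ, hγpos, fun e he h1 h2 => ?_⟩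
    rcases eq_or_lt_of_le h2 with heq | hlt
    · rw [heq]; simpa using le_of_lt hε
    · have hden : (0:ℝ) < c' - e := by linarith
      set wa : ℝ := (c' - c) / (c' - e) with hwa
      set wb : ℝ := (c - e) / (c' - e) with hwb
      have hwa0 : 0 ≤ wa := by
        rw [hwa]; apply div_nonneg (by linarith) (le_of_lt hden)
      have hwb0 : 0 ≤ wb := by
        rw [hwb]; apply div_nonneg (by linarith) (le_of_lt hden)
      have hwsum : wa + wb = 1 := by
        rw [hwa, hwb]
        field_simp
        ring
      have hcomb : wa • e + wb • c' = c := by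
        simp only [smul_eq_mul, hwa, hwb]
        field_simp
        ring
      have hcx := hcv.2 he hc'u hwa0 hwb0 hwsum
      rw [hcomb] at hcx
      simp only [smul_eq_mul] at hcx
      have hfc' : f c' ≤ p 1 := le_trans (fch_le hnn hc'u) (hmono hc'u h1u hc'1)
      have hfe0 : 0 ≤ f e := fch_nonneg hnn he
      have hA : f c - f e ≤ wb * (f c' - f e) := by
        have hwa' : wa = 1 - wb := by linarith
        rw [hwa'] at hcx
        calc f c - f e ≤ ((1 - wb) * f e + wb * f c') - f e := by linarith
          _ = wb * (f c' - f e) := by ring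
      have hB : wb * (f c' - f e) ≤ wb * p 1 :=
        mul_le_mul_of_nonneg_left (by linarith) hwb0
      have hC : wb ≤ (c - e) / (c' - c) := by
        rw [hwb]
        exact div_le_div_of_nonneg_left (by linarith) (by linarith) (by linarith)
      have hD : wb * p 1 ≤ ((c - e) / (c' - c)) * p 1 :=
        mul_le_mul_of_nonneg_right hC hp1
      have hE : ((c - e) / (c' - c)) * p 1 ≤ (γ / (c' - c)) * p 1 := by
        apply mul_le_mul_of_nonneg_right _ hp1
        exact (div_le_div_iff_of_pos_right (by linarith)).2 (by linarith)
      have hF : (γ / (c' - c)) * p 1 ≤ ε := by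
        rw [div_mul_eq_mul_div, div_le_iff₀ (by linarith : (0:ℝ) < c' - c)]
        nlinarith
      linarith

/-- Increments of the convex hull below `ℓ(f|β)` are at most `β` per unit. -/
lemma fch_incr_le (hnn : ∀ u ∈ unitI, 0 ≤ p u) (hp0 : p 0 = 0)
    (hmono : MonotoneOn p unitI) (hlc : LowerContOn unitI p)
    {β d c : ℝ} (hβ : 0 ≤ β) (hd : 0 ≤ d) (hdc : d ≤ c) (hc1 : c ≤ 1)
    (hcl : c ≤ ell (funConvHull unitI p) β) :
    funConvHull unitI p c - funConvHull unitI p d ≤ β * (c - d) := by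
  set f := funConvHull unitI p with hf
  have hcv : ConvexOn ℝ unitI f := fch_convexOn hnn
  have hcu : c ∈ unitI := ⟨le_trans hd hdc, hc1⟩
  have hdu : d ∈ unitI := ⟨hd, le_trans hdc hc1⟩
  by_contra hcon
  push_neg at hcon
  have hdc' : d < c := by
    rcases eq_or_lt_of_le hdc with h | h
    · exfalso; rw [← h] at hcon; simp at hcon
    · exact h
  set η : ℝ := f c - f d - β * (c - d) with hη
  have hηpos : 0 < η := by rw [hη]; linarith
  obtain ⟨γ, hγpos, hγ⟩ := fch_left_cont hnn hmono hlc hcu (show (0:ℝ) < η/2 by linarith)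
  set γ' : ℝ := min γ ((c - d) / 2) with hγ'
  have hγ'pos : 0 < γ' := lt_min hγpos (by linarith)
  obtain ⟨e, he_mem, he_gt⟩ := exists_lt_of_lt_csSup (ellSet_nonempty (f := f) (β := β))
    (show ell f β - γ' < ell f β by linarith)
  obtain ⟨heu, heD⟩ := he_mem
  rcases le_total c e with hce | hec
  · have hmono' := leftD_mono_cv hcv hcu heu hce
    have h1 : leftD f c ≤ (β : EReal) := le_trans hmono' heD
    have h2 := leftD_le_bound h1 hd hdc
    linarith
  · have h0 : c - γ' ≤ e := by linarith
    have hed : d ≤ e := by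
      have h2 : γ' ≤ (c - d) / 2 := min_le_right _ _
      linarith
    have hfc_fe : f c - f e ≤ η / 2 := by
      apply hγ e heu _ hec
      have h2 : γ' ≤ γ := min_le_left _ _
      linarith
    have hfe_fd : f e - f d ≤ β * (e - d) := leftD_le_bound heD hd hed
    have : β * (e - d) ≤ β * (c - d) := mul_le_mul_of_nonneg_left (by linarith) hβ
    linarith

end E3


lemma arith7 {G g₀ cd u ζ : ℝ} (h5 : (G - g₀)*g₀ < (G - g₀)*(cd*(u-ζ)))
    (h6 : (G-g₀)*(cd*(u-ζ)) = (g₀*g₀)*(u-ζ)) (hg : 0 < g₀) : G - g₀ < g₀*(u-ζ) := by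
  nlinarith

lemma arith8 {V F G g₀ β u ζ : ℝ} (hVF : V - F = G - g₀) (h7 : G - g₀ < g₀ * (u - ζ)) :
    V + (β - g₀) * (u - ζ) ≤ F + β * (u - ζ) := by nlinarith

section F
variable {p : ℝ → ℝ}

/-- The key "combination" bound: if `t` is undominated from below for a buyer with
marginal value `β`, then `p t ≤ f(ℓ(f|β)) + β (max t ζ - ζ)`. -/
lemma combo_bound (hnn : ∀ u ∈ unitI, 0 ≤ p u) (hp0 : p 0 = 0)
    (hmono : MonotoneOn p unitI)
    {β t : ℝ} (hβ : 0 ≤ β) (ht : t ∈ unitI)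
    (hund : ∀ y, 0 ≤ y → y ≤ t → p t - β * (t - y) ≤ p y) :
    p t ≤ funConvHull unitI p (ell (funConvHull unitI p) β)
      + β * (max t (ell (funConvHull unitI p) β) - ell (funConvHull unitI p) β) := by
  set f := funConvHull unitI p with hf
  set ζ := ell f β with hζdef
  have hζu : ζ ∈ unitI := ell_mem_unitI
  set s : ℝ := max t ζ with hs
  have hsu : s ∈ unitI := ⟨le_trans ht.1 (le_max_left _ _), max_le ht.2 hζu.2⟩
  have hts : t ≤ s := le_max_left _ _
  have hζs : ζ ≤ s := le_max_right _ _
  clear_value f ζ s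
  by_contra hcon
  push_neg at hcon
  -- abbreviations
  obtain ⟨F, hF⟩ : ∃ F, F = f ζ := ⟨_, rfl⟩
  obtain ⟨P', hP'⟩ : ∃ P', P' = p t - β * (s - ζ) := ⟨_, rfl⟩
  have hFP : F < P' := by rw [hF, hP']; linarith
  obtain ⟨G, hG⟩ : ∃ G, G = P' - F := ⟨_, rfl⟩
  have hGpos : 0 < G := by rw [hG]; linarith
  have hβG : 0 < β + G := by linarith
  obtain ⟨g₀, hg₀⟩ : ∃ g₀, g₀ = β * G / (β + G) := ⟨_, rfl⟩
  have hg₀0 : 0 ≤ g₀ := by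
    rw [hg₀]
    apply div_nonneg (mul_nonneg hβ (le_of_lt hGpos)) (le_of_lt hβG)
  have hg₀G : g₀ < G := by
    rw [hg₀, div_lt_iff₀ hβG]; nlinarith
  have hid : (G - g₀) * (β - g₀) = g₀ * g₀ := by
    rw [hg₀]
    field_simp
    ring
  obtain ⟨V, hV⟩ : ∃ V, V = P' - g₀ := ⟨_, rfl⟩
  obtain ⟨cd, hcd⟩ : ∃ cd, cd = β - g₀ := ⟨_, rfl⟩
  have hcd0 : 0 ≤ cd := by
    rw [hcd, hg₀, sub_nonneg, div_le_iff₀ hβG]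
    nlinarith
  -- pointwise lower bound of p by the affine function cd * u + (V - cd * ζ)
  have hpt : ∀ u ∈ unitI, cd * u + (V - cd * ζ) ≤ p u := by
    intro u hu
    have hgoal : cd * u + (V - cd * ζ) = V + cd * (u - ζ) := by ring
    rw [hgoal]
    rcases le_total u s with hus | hsu'
    · -- u ≤ s : use the undominatedness bound
      have hplb : P' + β * (u - ζ) ≤ p u := by
        rcases le_total u t with hut | htu
        · have h1 := hund u hu.1 hut
          have h2 : 0 ≤ β * (s - t) := mul_nonneg hβ (by linarith)
          rw [hP']
          nlinarith
        · have h1 : p t ≤ p u := hmono ht hu htu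
          have h2 : β * (u - ζ) ≤ β * (s - ζ) := mul_le_mul_of_nonneg_left (by linarith) hβ
          rw [hP']
          linarith
      have h3 : 0 ≤ g₀ * (1 + u - ζ) :=
        mul_nonneg hg₀0 (by linarith [hu.1, hζu.2])
      have h4 : V + cd * (u - ζ) ≤ P' + β * (u - ζ) := by
        rw [hV, hcd]
        nlinarith
      linarith
    · -- s ≤ u
      have hζun : ζ ≤ u := le_trans hζs hsu'
      have h1 : p t ≤ p u := hmono ht hu (le_trans hts hsu')
      have h2 : P' ≤ p u := by
        rw [hP']
        have : 0 ≤ β * (s - ζ) := mul_nonneg hβ (by linarith)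
        linarith
      have h3 : F + β * (u - ζ) ≤ p u := by
        have hg := fch_growth hnn hp0 hβ hu (by rw [hζdef, hf] at hζun; exact hζun)
        rw [← hf, ← hζdef] at hg
        have hfu : f u ≤ p u := by rw [hf]; exact fch_le hnn hu
        rw [hF]
        linarith
      rcases le_or_gt (cd * (u - ζ)) g₀ with hcase | hcase
      · have : V + cd * (u - ζ) ≤ V + g₀ := by linarith
        rw [hV] at this
        linarith
      · have hcdpos : 0 < cd := by
          rcases eq_or_lt_of_le hcd0 with h | h
          · exfalso
            rw [← h] at hcase
            simp at hcase
            nlinarith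
          · exact h
        have hg0pos : 0 < g₀ := by
          rcases eq_or_lt_of_le hg₀0 with h | h
          · exfalso
            have hβ0 : β ≤ 0 := by nlinarith [hid, hGpos]
            rw [hcd] at hcdpos
            linarith
          · exact h
        have h5 : (G - g₀) * g₀ < (G - g₀) * (cd * (u - ζ)) :=
          mul_lt_mul_of_pos_left hcase (by linarith)
        have h6 : (G - g₀) * (cd * (u - ζ)) = (g₀ * g₀) * (u - ζ) := by
          rw [hcd, ← hid]; ring
        have h7 : G - g₀ < g₀ * (u - ζ) := arith7 h5 h6 hg0pos
        have h8 : V + cd * (u - ζ) ≤ F + β * (u - ζ) := by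
          have hVF : V - F = G - g₀ := by rw [hV, hG]; ring
          rw [hcd]
          exact arith8 hVF h7
        linarith
  have hfinal := fch_lb hnn cd (V - cd * ζ) hpt hζu
  rw [← hf, ← hF] at hfinal
  have hVF : F < V := by
    rw [hV]
    have : g₀ < G := hg₀G
    rw [hG] at this
    linarith
  linarith

/-- The demanded quantity of an undominated point never exceeds `ℓ(f|β)`,
and its price is at most `f(ℓ(f|β))`. -/
lemma undominated_le_ell (hnn : ∀ u ∈ unitI, 0 ≤ p u) (hp0 : p 0 = 0)
    (hmono : MonotoneOn p unitI) (hlc : LowerContOn unitI p)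
    {β t : ℝ} (hβ : 0 ≤ β) (ht : t ∈ unitI)
    (hund : ∀ y, 0 ≤ y → y ≤ t → p t - β * (t - y) ≤ p y) :
    p t ≤ funConvHull unitI p (ell (funConvHull unitI p) β) := by
  set f := funConvHull unitI p with hf
  set ζ := ell f β with hζdef
  have hζu : ζ ∈ unitI := ell_mem_unitI
  clear_value f ζ
  have hcombo := combo_bound hnn hp0 hmono hβ ht hund
  rw [← hf, ← hζdef] at hcombo
  rcases le_total t ζ with htζ | hζt
  · rw [max_eq_right htζ] at hcombo
    simpa using hcombo
  · rw [max_eq_left hζt] at hcombo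
    -- show t ≤ ζ anyway, by proving leftD f t ≤ β
    have hft : f t ≤ p t := by rw [hf]; exact fch_le hnn ht
    have hleft : leftD f t ≤ (β : EReal) := by
      rw [leftD_le_iff]
      intro δ hδ1 hδ2
      rw [div_le_iff₀ hδ1]
      set y : ℝ := t - δ with hy
      have hyu : y ∈ unitI := ⟨by linarith [ht.1], by linarith [ht.2]⟩
      rcases le_total ζ y with hζy | hyζ
      · have hg := fch_growth hnn hp0 hβ hyu (by rw [hζdef, hf] at hζy; exact hζy)
        rw [← hf, ← hζdef] at hg
        nlinarith
      · have hincr := fch_incr_le hnn hp0 hmono hlc hβ hyu.1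
          (show y ≤ ell (funConvHull unitI p) β by rw [← hf, ← hζdef]; linarith)
          (by rw [← hf, ← hζdef]; exact hζu.2) (le_refl _)
        rw [← hf, ← hζdef] at hincr
        nlinarith
    have ht2 : t ≤ ζ := by
      have := le_ell ht hleft
      rw [← hζdef] at this
      exact this
    have ht3 : t = ζ := le_antisymm ht2 hζt
    rw [ht3] at hcombo ⊢
    simpa using hcombo


end F

lemma cube_coord {m : ℕ} {x : Fin m → ℝ} (hx : x ∈ cube m) (j : Fin m) : x j ∈ unitI :=
  ⟨hx.1 j, hx.2 j⟩

lemma mem_cube {m : ℕ} {x : Fin m → ℝ} (hx : ∀ j, x j ∈ unitI) : x ∈ cube m :=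
  ⟨fun j => (hx j).1, fun j => (hx j).2⟩

/-- Construction of a demand point for the discretized prices with payment
`min b (∑ q j (ζ j))`. -/
lemma exists_demand_point {m : ℕ} (q : Fin m → ℝ → ℝ) (w : Fin m → ℝ) (ζ : Fin m → ℝ)
    (b : ℝ) (hb : 0 ≤ b)
    (hq0 : ∀ j, q j 0 = 0) (hqmono : ∀ j, Monotone (q j))
    (hqcont : ∀ j, Continuous (q j)) (hqconv : ∀ j, ConvexOn ℝ unitI (q j))
    (hζu : ∀ j, ζ j ∈ unitI)
    (hargmax : ∀ j, ∀ y ∈ unitI, w j * y - q j y ≤ w j * ζ j - q j (ζ j)) :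
    ∃ x ∈ demand (cube m) (fun x => ∑ j, q j (x j)) (fun x => ∑ j, w j * x j) (b : EReal),
      (∑ j, q j (x j)) = min b (∑ j, q j (ζ j)) := by
  set Q : (Fin m → ℝ) → ℝ := fun x => ∑ j, q j (x j) with hQ
  set Vv : (Fin m → ℝ) → ℝ := fun x => ∑ j, w j * x j with hVv
  set A := afford (cube m) Q (b : EReal) with hA
  have hQcont : Continuous Q := continuous_finset_sum _ (fun j _ =>
    (hqcont j).comp (continuous_apply j))
  have hVcont : Continuous Vv := continuous_finset_sum _ (fun j _ =>
    continuous_const.mul (continuous_apply j))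
  have hUcont : Continuous (fun x => Vv x - Q x) := hVcont.sub hQcont
  have h0cube : (0 : Fin m → ℝ) ∈ cube m := mem_cube (fun j => ⟨le_refl 0, zero_le_one⟩)
  have hQ0 : Q 0 = 0 := by
    rw [hQ]; simp [hq0]
  have h0A : (0 : Fin m → ℝ) ∈ A := by
    refine ⟨h0cube, ?_⟩
    rw [hQ0]
    exact EReal.coe_le_coe_iff.2 hb
  haveI hAne : Nonempty A := ⟨⟨0, h0A⟩⟩
  have hzcube : (fun j => ζ j) ∈ cube m := mem_cube hζu
  have hUmax : ∀ x ∈ cube m, Vv x - Q x ≤ Vv (fun j => ζ j) - Q (fun j => ζ j) := by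
    intro x hx
    rw [hQ, hVv]
    rw [← Finset.sum_sub_distrib, ← Finset.sum_sub_distrib]
    exact Finset.sum_le_sum (fun j _ => hargmax j (x j) (cube_coord hx j))
  have hbdd : BddAbove (Set.range (fun x : A => Vv x.1 - Q x.1)) := by
    refine ⟨Vv (fun j => ζ j) - Q (fun j => ζ j), ?_⟩
    rintro _ ⟨⟨y, hy⟩, rfl⟩
    exact hUmax y hy.1
  -- the value of any affordable point is ≤ the unconstrained max
  rcases le_or_gt (Q (fun j => ζ j)) b with hWb | hWb
  · -- unconstrained optimum affordable
    have hzA : (fun j => ζ j) ∈ A := ⟨hzcube, EReal.coe_le_coe_iff.2 hWb⟩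
    have hust : uStar (cube m) Q Vv (b : EReal) = Vv (fun j => ζ j) - Q (fun j => ζ j) := by
      apply le_antisymm
      · exact ciSup_le (fun ⟨y, hy⟩ => hUmax y hy.1)
      · exact le_ciSup hbdd ⟨(fun j => ζ j), hzA⟩
    refine ⟨(fun j => ζ j), ⟨hzA, hust.symm⟩, ?_⟩
    rw [min_eq_right hWb]
  · -- budget-constrained case
    have hAcomp : IsCompact A := by
      have : A = (cube m) ∩ Q ⁻¹' (Set.Iic b) := by
        ext x
        constructor
        · intro ⟨h1, h2⟩
          exact ⟨h1, EReal.coe_le_coe_iff.1 h2⟩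
        · intro ⟨h1, h2⟩
          exact ⟨h1, EReal.coe_le_coe_iff.2 h2⟩
      rw [this]
      exact (isCompact_Icc).inter_right (isClosed_Iic.preimage hQcont)
    obtain ⟨x₀, hx₀A, hx₀max'⟩ := hAcomp.exists_isMaxOn ⟨0, h0A⟩ hUcont.continuousOn
    have hx₀max : ∀ y ∈ A, Vv y - Q y ≤ Vv x₀ - Q x₀ := fun y hy => hx₀max' hy
    have hust : uStar (cube m) Q Vv (b : EReal) = Vv x₀ - Q x₀ := by
      apply le_antisymm
      · exact ciSup_le (fun ⟨y, hy⟩ => hx₀max y hy)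
      · exact le_ciSup hbdd ⟨x₀, hx₀A⟩
    have hx₀b : Q x₀ ≤ b := EReal.coe_le_coe_iff.1 hx₀A.2
    rcases eq_or_lt_of_le hx₀b with hQb | hQb
    · -- budget exactly exhausted at the optimum
      refine ⟨x₀, ⟨hx₀A, hust.symm⟩, ?_⟩
      rw [show (∑ j, q j (x₀ j)) = Q x₀ from rfl, hQb, min_eq_left (le_of_lt hWb)]
    -- path from x₀ to ζ
    set c : ℝ → (Fin m → ℝ) := fun s => fun j => x₀ j + s * (ζ j - x₀ j) with hc
    have hccube : ∀ s, 0 ≤ s → s ≤ 1 → c s ∈ cube m := by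
      intro s h0 h1
      apply mem_cube
      intro j
      have h2 := cube_coord hx₀A.1 j
      have h3 := hζu j
      have hcsj : c s j = x₀ j + s * (ζ j - x₀ j) := rfl
      constructor
      · rw [hcsj]
        nlinarith [mul_nonneg (by linarith : (0:ℝ) ≤ 1 - s) h2.1, mul_nonneg h0 h3.1]
      · rw [hcsj]
        nlinarith [mul_le_mul_of_nonneg_left h2.2 (by linarith : (0:ℝ) ≤ 1 - s),
          mul_le_mul_of_nonneg_left h3.2 h0]
    have hcQcont : Continuous (fun s => Q (c s)) := by
      apply hQcont.comp
      exact continuous_pi (fun j => continuous_const.add (continuous_id.mul continuous_const))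
    have hcutil : ∀ s, 0 ≤ s → s ≤ 1 →
        (1 - s) * (Vv x₀ - Q x₀) + s * (Vv (fun j => ζ j) - Q (fun j => ζ j))
          ≤ Vv (c s) - Q (c s) := by
      intro s h0 h1
      rw [hQ, hVv]
      rw [← Finset.sum_sub_distrib, ← Finset.sum_sub_distrib, ← Finset.sum_sub_distrib]
      have : ∀ x : Fin m → ℝ, (1 - s) * (∑ j, (w j * x j - q j (x j)))
          = ∑ j, (1 - s) * (w j * x j - q j (x j)) := fun x => Finset.mul_sum _ _ _
      rw [this, Finset.mul_sum, ← Finset.sum_add_distrib]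
      apply Finset.sum_le_sum
      intro j _
      have hconv := (hqconv j).2 (cube_coord hx₀A.1 j) (hζu j)
        (by linarith : (0:ℝ) ≤ 1 - s) (by linarith : (0:ℝ) ≤ s) (by ring)
      simp only [smul_eq_mul] at hconv
      have harg : (1 - s) * x₀ j + s * ζ j = x₀ j + s * (ζ j - x₀ j) := by ring
      rw [harg] at hconv
      have : c s j = x₀ j + s * (ζ j - x₀ j) := rfl
      rw [this]
      nlinarith [hconv]
    have hUeq : Vv x₀ - Q x₀ = Vv (fun j => ζ j) - Q (fun j => ζ j) := by
      rcases eq_or_lt_of_le (hUmax x₀ hx₀A.1) with h | h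
      · exact h
      · exfalso
        -- find a small s with Q (c s) < b, contradicting optimality of x₀
        have hev : ∀ᶠ s in nhds (0:ℝ), Q (c s) < b := by
          have hc0 : Q (c 0) = Q x₀ := by
            congr 1
            funext j
            simp [hc]
          apply Filter.Eventually.mono (hcQcont.continuousAt.eventually_lt
            continuousAt_const (by rw [hc0]; exact hQb))
          intro s hs
          exact hs
        obtain ⟨ε, hε, hball⟩ := Metric.eventually_nhds_iff.1 hev
        set s₀ : ℝ := min (ε / 2) 1 with hs₀
        have hs₀pos : 0 < s₀ := lt_min (by linarith) zero_lt_one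
        have hs₀1 : s₀ ≤ 1 := min_le_right _ _
        have hs₀ε : dist s₀ 0 < ε := by
          rw [Real.dist_eq, sub_zero, abs_of_pos hs₀pos]
          calc s₀ ≤ ε / 2 := min_le_left _ _
            _ < ε := by linarith
        have hQs₀ : Q (c s₀) < b := hball hs₀ε
        have hcs₀A : c s₀ ∈ A :=
          ⟨hccube s₀ (le_of_lt hs₀pos) hs₀1, EReal.coe_le_coe_iff.2 (le_of_lt hQs₀)⟩
        have h4 := hcutil s₀ (le_of_lt hs₀pos) hs₀1
        have h5 := hx₀max (c s₀) hcs₀A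
        nlinarith
    -- now walk along the path to exhaust the budget
    have hc0 : c 0 = x₀ := by funext j; simp [hc]
    have hc1 : c 1 = (fun j => ζ j) := by funext j; simp [hc]
    have hb_mem : b ∈ Set.Icc (Q (c 0)) (Q (c 1)) := by
      rw [hc0, hc1]
      exact ⟨hx₀b, le_of_lt hWb⟩
    obtain ⟨s₀, hs₀mem, hs₀eq⟩ := intermediate_value_Icc zero_le_one
      hcQcont.continuousOn hb_mem
    have hcs₀cube := hccube s₀ hs₀mem.1 hs₀mem.2
    have hs₀eq' : Q (c s₀) = b := hs₀eq
    have hcs₀A : c s₀ ∈ A := ⟨hcs₀cube, by rw [hs₀eq']⟩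
    have h4 := hcutil s₀ hs₀mem.1 hs₀mem.2
    rw [← hUeq] at h4
    have h5 : Vv (c s₀) - Q (c s₀) = Vv x₀ - Q x₀ := by
      have h6 := hUmax (c s₀) hcs₀cube
      rw [← hUeq] at h6
      nlinarith
    refine ⟨c s₀, ⟨hcs₀A, by rw [h5, hust]⟩, ?_⟩
    rw [show (∑ j, q j (c s₀ j)) = Q (c s₀) from rfl, hs₀eq', min_eq_left (le_of_lt hWb)]

/-- Coordinates of a demand point are undominated from below. -/
lemma demand_coord_und {m : ℕ} (p : Fin m → ℝ → ℝ) (w : Fin m → ℝ) (hw : ∀ j, 0 ≤ w j)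
    (hp_nonneg : ∀ j, ∀ x ∈ unitI, 0 ≤ p j x) (hp_mono : ∀ j, MonotoneOn (p j) unitI)
    (b : ℝ) {x : Fin m → ℝ}
    (hx : x ∈ demand (cube m) (fun x => ∑ j, p j (x j)) (fun x => ∑ j, w j * x j)
      (b : EReal)) (j : Fin m) :
    ∀ y, 0 ≤ y → y ≤ x j → p j (x j) - w j * (x j - y) ≤ p j y := by
  obtain ⟨⟨hxc, hxa⟩, hxu⟩ := hx
  intro y hy0 hyx
  have hxju : x j ∈ unitI := cube_coord hxc j
  have hyu : y ∈ unitI := ⟨hy0, le_trans hyx hxju.2⟩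
  set x' := Function.update x j y with hx'
  have hx'c : x' ∈ cube m := by
    apply mem_cube
    intro r
    rw [hx', Function.update_apply]
    split
    · exact hyu
    · exact cube_coord hxc r
  have hsplit : ∀ g : Fin m → ℝ → ℝ,
      ∑ r, g r (x' r) = (∑ r, g r (x r)) - g j (x j) + g j y := by
    intro g
    have h1 := Finset.sum_eq_sum_sdiff_singleton_add (Finset.mem_univ j) (fun r => g r (x' r))
    have h2 := Finset.sum_eq_sum_sdiff_singleton_add (Finset.mem_univ j) (fun r => g r (x r))
    have h3 : ∑ r ∈ Finset.univ \ {j}, g r (x' r) = ∑ r ∈ Finset.univ \ {j}, g r (x r) := by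
      apply Finset.sum_congr rfl
      intro r hr
      have hrj : r ≠ j := (Finset.mem_sdiff.1 hr).2 ∘ Finset.mem_singleton.2
      rw [hx', Function.update_of_ne hrj]
    have h4 : x' j = y := by rw [hx', Function.update_self]
    rw [h1, h2, h3, h4]
    ring
  have hPle : p j y ≤ p j (x j) := hp_mono j hyu hxju hyx
  have hP' : ∑ r, p r (x' r) = (∑ r, p r (x r)) - p j (x j) + p j y := hsplit p
  have hV' : ∑ r, w r * x' r = (∑ r, w r * x r) - w j * x j + w j * y :=
    hsplit (fun r t => w r * t)
  have hx'a : x' ∈ afford (cube m) (fun x => ∑ j, p j (x j)) (b : EReal) := by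
    refine ⟨hx'c, ?_⟩
    have hb' : (∑ r, p r (x r)) ≤ b := EReal.coe_le_coe_iff.1 hxa
    apply EReal.coe_le_coe_iff.2
    show (∑ r, p r (x' r)) ≤ b
    rw [hP']
    linarith
  have hbdd : BddAbove (Set.range
      (fun z : afford (cube m) (fun x => ∑ j, p j (x j)) (b : EReal) =>
        (∑ r, w r * z.1 r) - ∑ r, p r (z.1 r))) := by
    refine ⟨∑ r, w r, ?_⟩
    rintro _ ⟨⟨z, hz⟩, rfl⟩
    show (∑ r, w r * z r) - (∑ r, p r (z r)) ≤ ∑ r, w r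
    have h5 : ∑ r, w r * z r ≤ ∑ r, w r := by
      apply Finset.sum_le_sum
      intro r _
      calc w r * z r ≤ w r * 1 :=
            mul_le_mul_of_nonneg_left (cube_coord hz.1 r).2 (hw r)
        _ = w r := mul_one _
    have h6 : 0 ≤ ∑ r, p r (z r) :=
      Finset.sum_nonneg (fun r _ => hp_nonneg r _ (cube_coord hz.1 r))
    linarith
  have hle := le_ciSup hbdd ⟨x', hx'a⟩
  have hxu' : (∑ r, w r * x r) - (∑ r, p r (x r))
      = ⨆ z : afford (cube m) (fun x => ∑ j, p j (x j)) (b : EReal),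
          ((∑ r, w r * z.1 r) - ∑ r, p r (z.1 r)) := hxu
  have hle' : (∑ r, w r * x' r) - (∑ r, p r (x' r))
      ≤ (∑ r, w r * x r) - (∑ r, p r (x r)) := by
    rw [hxu']
    exact hle
  rw [hP', hV'] at hle'
  linarith


/-- With `n` buyers (budgets `b i ≥ 0`, linear valuations with
coefficients `v i j ≥ 0`) and `m` datasets with MLC pricing functions `p j`, let
`S_j = {v i j : i}` and `p̂_j = disc(conv(p j), S_j)`.  Then the separable pricing
`p̂(x) = ∑ j, p̂_j (x j)` earns at least as much revenue as `p(x) = ∑ j, p j (x j)`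
from every buyer, and each `p̂_j` is monotone, continuous, convex and
piecewise-linear. -/
theorem stmt13 (n m : ℕ) (b : Fin n → ℝ) (hb : ∀ i, 0 ≤ b i)
    (v : Fin n → Fin m → ℝ) (hv : ∀ i j, 0 ≤ v i j)
    (p : Fin m → ℝ → ℝ)
    (hp_nonneg : ∀ j, ∀ x ∈ unitI, 0 ≤ p j x) (hp0 : ∀ j, p j 0 = 0)
    (hp_mono : ∀ j, MonotoneOn (p j) unitI)
    (hp_lc : ∀ j, LowerContOn unitI (p j))
    (phat : Fin m → ℝ → ℝ)
    (hphat : ∀ j, phat j =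
      disc (funConvHull unitI (p j)) (Finset.image (fun i => v i j) Finset.univ)) :
    (∀ i : Fin n,
      revenue (cube m) (fun x => ∑ j, phat j (x j)) (fun x => ∑ j, v i j * x j)
          (b i : EReal) ≥
        revenue (cube m) (fun x => ∑ j, p j (x j)) (fun x => ∑ j, v i j * x j)
          (b i : EReal)) ∧
    (∀ j : Fin m, MonotoneOn (phat j) unitI ∧ ContinuousOn (phat j) unitI ∧
      ConvexOn ℝ unitI (phat j) ∧ PiecewiseLinearOn (phat j)) := by
  have hSnn : ∀ j : Fin m, ∀ a ∈ Finset.image (fun i => v i j) Finset.univ, 0 ≤ a := by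
    intro j a ha
    obtain ⟨i, _, rfl⟩ := Finset.mem_image.1 ha
    exact hv i j
  have hqmono : ∀ j, Monotone (phat j) := by
    intro j
    rw [hphat j]
    exact disc_mono (hSnn j)
  have hqcont : ∀ j, Continuous (phat j) := by
    intro j
    rw [hphat j]
    exact disc_continuous _ _
  have hqconv : ∀ j, ConvexOn ℝ unitI (phat j) := by
    intro j
    rw [hphat j]
    exact disc_convexOn (hSnn j)
  have hpart2 : ∀ j : Fin m, MonotoneOn (phat j) unitI ∧ ContinuousOn (phat j) unitI ∧
      ConvexOn ℝ unitI (phat j) ∧ PiecewiseLinearOn (phat j) := by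
    intro j
    refine ⟨(hqmono j).monotoneOn _, (hqcont j).continuousOn, hqconv j, ?_⟩
    rw [hphat j]
    exact disc_piecewiseLinearOn _ _
  refine ⟨?_, hpart2⟩
  intro i
  rw [ge_iff_le]
  -- abbreviations for buyer i
  have hβS : ∀ j, v i j ∈ Finset.image (fun i' => v i' j) Finset.univ :=
    fun j => Finset.mem_image_of_mem _ (Finset.mem_univ i)
  have hq0 : ∀ j, phat j 0 = 0 := by
    intro j
    rw [hphat j, disc_zero, fch_zero (hp_nonneg j) (hp0 j)]
  have hζu : ∀ j, ell (funConvHull unitI (p j)) (v i j) ∈ unitI := fun j => ell_mem_unitI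
  have hfincr : ∀ j, ∀ γ ∈ Finset.image (fun i' => v i' j) Finset.univ, ∀ d c : ℝ,
      0 ≤ d → d ≤ c → c ≤ ell (funConvHull unitI (p j)) γ →
      funConvHull unitI (p j) c - funConvHull unitI (p j) d ≤ γ * (c - d) := by
    intro j γ hγ d c h1 h2 h3
    exact fch_incr_le (hp_nonneg j) (hp0 j) (hp_mono j) (hp_lc j) (hSnn j γ hγ) h1 h2
      (le_trans h3 ell_le_one) h3
  have hargmax : ∀ j, ∀ y ∈ unitI,
      v i j * y - phat j y ≤ v i j * ell (funConvHull unitI (p j)) (v i j)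
        - phat j (ell (funConvHull unitI (p j)) (v i j)) := by
    intro j y hy
    rw [hphat j]
    rcases le_total y (ell (funConvHull unitI (p j)) (v i j)) with h | h
    · have h1 := disc_incr_le (hβS j) ⟨v i j, hβS j⟩ hy h
      nlinarith [mul_le_mul_of_nonneg_left h (hv i j)]
    · have h1 := disc_incr_ge (hβS j) ⟨v i j, hβS j⟩ hy h
      nlinarith [mul_le_mul_of_nonneg_left h (hv i j)]
  obtain ⟨xh, hxhdem, hxhprice⟩ := exists_demand_point phat (v i)
    (fun j => ell (funConvHull unitI (p j)) (v i j)) (b i) (hb i)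
    hq0 hqmono hqcont hqconv hζu hargmax
  -- the revenue of phat is at least the payment of xh
  have hrevbdd : BddAbove (Set.range (fun x : demand (cube m)
      (fun x => ∑ j, phat j (x j)) (fun x => ∑ j, v i j * x j) ((b i : ℝ) : EReal) =>
        (fun x => ∑ j, phat j (x j)) x.1)) := by
    refine ⟨b i, ?_⟩
    rintro _ ⟨⟨z, hz⟩, rfl⟩
    exact EReal.coe_le_coe_iff.1 hz.1.2
  have hrevhat : min (b i) (∑ j, phat j (ell (funConvHull unitI (p j)) (v i j)))
      ≤ revenue (cube m) (fun x => ∑ j, phat j (x j)) (fun x => ∑ j, v i j * x j)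
        ((b i : ℝ) : EReal) := by
    rw [← hxhprice]
    exact le_ciSup hrevbdd ⟨xh, hxhdem⟩
  have hW0 : 0 ≤ ∑ j, phat j (ell (funConvHull unitI (p j)) (v i j)) := by
    apply Finset.sum_nonneg
    intro j _
    have := hqmono j (hζu j).1
    rw [hq0 j] at this
    exact this
  -- the revenue of p is bounded by min (b i) W
  apply Real.iSup_le _ (le_trans (le_min (hb i) hW0) hrevhat)
  rintro ⟨xs, hxsdem⟩
  have hund := demand_coord_und p (v i) (fun j => hv i j) hp_nonneg hp_mono (b i) hxsdem
  have hcoord : ∀ j, p j (xs j) ≤ phat j (ell (funConvHull unitI (p j)) (v i j)) := by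
    intro j
    have h1 := undominated_le_ell (hp_nonneg j) (hp0 j) (hp_mono j) (hp_lc j) (hv i j)
      (cube_coord hxsdem.1.1 j) (hund j)
    have h2 : funConvHull unitI (p j) (ell (funConvHull unitI (p j)) (v i j))
        ≤ phat j (ell (funConvHull unitI (p j)) (v i j)) := by
      rw [hphat j]
      exact f_le_disc (hβS j) (hfincr j)
    linarith
  have hsum : (∑ j, p j (xs j)) ≤ ∑ j, phat j (ell (funConvHull unitI (p j)) (v i j)) :=
    Finset.sum_le_sum (fun j _ => hcoord j)
  have hble : (∑ j, p j (xs j)) ≤ b i := EReal.coe_le_coe_iff.1 hxsdem.1.2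
  exact le_trans (le_min hble hsum) hrevhat

end
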